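/- For any ICC digraph D, the optimal broadcast rate β(D) = inf_t β_t(D) equals n − k + 1, where n is the number of vertices and k the number of Type-I paths. -/

import Mathlib

/-- An ICC digraph with `k` Type-I paths. `n1 i ≥ 1` is the number of vertices of
Type-I path `P_i`; `n2 i j` is the number of vertices of Type-II path `P_{i,j}`
(`0` if empty, and `n2 i i = 0`); `q i j` (1-based, `1 ≤ q i j ≤ n1 j`) is the
index of the vertex of `P_j` that the arc leaving `P_{i,j}` (or, if `P_{i,j}` is
empty, the arc leaving the terminal vertex of `P_i`) points to. -/
structure ICCDigraph (k : ℕ) where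
  n1 : Fin k → ℕ
  hn1 : ∀ i, 1 ≤ n1 i
  n2 : Fin k → Fin k → ℕ
  hdiag : ∀ i, n2 i i = 0
  q : Fin k → Fin k → ℕ
  hq1 : ∀ i j, 1 ≤ q i j
  hq2 : ∀ i j, q i j ≤ n1 j

namespace ICCDigraph

variable {k : ℕ} (D : ICCDigraph k)

/-- The vertex set: vertices `v_{a+1}^i = ⟨i, a⟩` of Type-I paths (0-based `a`),
and vertices `v_{b+1}^{ij} = ⟨(i,j), b⟩` of Type-II paths. -/
abbrev Vtx : Type :=
  (Σ i : Fin k, Fin (D.n1 i)) ⊕ (Σ p : Fin k × Fin k, Fin (D.n2 p.1 p.2))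

/-- The terminal vertex `v_{n_i}^i` of Type-I path `P_i`. -/
def terminal (i : Fin k) : D.Vtx :=
  Sum.inl ⟨i, ⟨D.n1 i - 1, by have := D.hn1 i; omega⟩⟩

/-- The arc relation of the ICC digraph: arcs along Type-I and Type-II paths,
and the interconnecting arcs. -/
def Arc : D.Vtx → D.Vtx → Prop
  | Sum.inl ⟨i, a⟩, Sum.inl ⟨j, a'⟩ =>
      (i = j ∧ (a' : ℕ) = (a : ℕ) + 1) ∨
      (i ≠ j ∧ (a : ℕ) = D.n1 i - 1 ∧ D.n2 i j = 0 ∧ (a' : ℕ) = D.q i j - 1)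
  | Sum.inl ⟨i, a⟩, Sum.inr ⟨p, b⟩ =>
      i = p.1 ∧ (a : ℕ) = D.n1 i - 1 ∧ (b : ℕ) = 0
  | Sum.inr ⟨p, b⟩, Sum.inr ⟨p', b'⟩ =>
      p = p' ∧ (b' : ℕ) = (b : ℕ) + 1
  | Sum.inr ⟨p, b⟩, Sum.inl ⟨j, a⟩ =>
      p.2 = j ∧ (b : ℕ) = D.n2 p.1 p.2 - 1 ∧ (a : ℕ) = D.q p.1 p.2 - 1

/-- A closed directed walk (cycle) starting and ending at `v`, visiting the
vertices `v :: l`. -/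
def IsClosedWalk (v : D.Vtx) (l : List D.Vtx) : Prop :=
  List.Chain D.Arc v (l ++ [v])

/-- `S` induces an acyclic subdigraph: no directed cycle lies within `S`. -/
def AcyclicOn (S : Finset D.Vtx) : Prop :=
  ¬ ∃ (v : D.Vtx) (l : List D.Vtx), v ∈ S ∧ (∀ u ∈ l, u ∈ S) ∧ D.IsClosedWalk v l

open Classical in
/-- `MAIS(D)`: the maximum order of an acyclic induced subdigraph. -/
noncomputable def mais : ℕ :=
  (Finset.univ.filter fun S : Finset D.Vtx => D.AcyclicOn S).sup Finset.card

/-- The message (1-based index `a`) of the `a`-th vertex of Type-I path `P_i`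
(`0` if out of range). -/
def msgI {t : ℕ} (x : D.Vtx → Fin t → ZMod 2) (i : Fin k) (a : ℕ) :
    Fin t → ZMod 2 :=
  if h : 1 ≤ a ∧ a ≤ D.n1 i then x (Sum.inl ⟨i, ⟨a - 1, by omega⟩⟩) else 0

/-- The message (1-based index `b`) of the `b`-th vertex of Type-II path
`P_{i,j}` (`0` if out of range). -/
def msgII {t : ℕ} (x : D.Vtx → Fin t → ZMod 2) (i j : Fin k) (b : ℕ) :
    Fin t → ZMod 2 :=
  if h : 1 ≤ b ∧ b ≤ D.n2 i j then x (Sum.inr ⟨(i, j), ⟨b - 1, by show b - 1 < D.n2 i j; omega⟩⟩) else 0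

/-- Index set of the ICC code's codewords: the `n_i - 1` codewords along each
Type-I path, the `n_{ij} - 1` codewords along each Type-II path, one codeword per
nonempty Type-II path, and the single codeword `⊕ᵢ x_{n_i}^i`. -/
abbrev CodeIdx : Type :=
  (Σ i : Fin k, Fin (D.n1 i - 1)) ⊕
    ((Σ p : Fin k × Fin k, Fin (D.n2 p.1 p.2 - 1)) ⊕
      (({p : Fin k × Fin k // 1 ≤ D.n2 p.1 p.2}) ⊕ Unit))

/-- The ICC code: `w_a^i = x_a^i ⊕ x_{a+1}^i`, `w_b^{ij} = x_b^{ij} ⊕ x_{b+1}^{ij}`,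
`w_{n_{ij}}^{ij} = x_{n_{ij}}^{ij} ⊕ x_{q_i}^j`, and `w' = ⊕ᵢ x_{n_i}^i`. -/
def code {t : ℕ} (x : D.Vtx → Fin t → ZMod 2) : D.CodeIdx → Fin t → ZMod 2
  | Sum.inl ⟨i, a⟩ => D.msgI x i ((a : ℕ) + 1) + D.msgI x i ((a : ℕ) + 2)
  | Sum.inr (Sum.inl ⟨p, b⟩) =>
      D.msgII x p.1 p.2 ((b : ℕ) + 1) + D.msgII x p.1 p.2 ((b : ℕ) + 2)
  | Sum.inr (Sum.inr (Sum.inl ⟨p, _⟩)) =>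
      D.msgII x p.1 p.2 (D.n2 p.1 p.2) + D.msgI x p.2 (D.q p.1 p.2)
  | Sum.inr (Sum.inr (Sum.inr _)) => ∑ i : Fin k, D.msgI x i (D.n1 i)

end ICCDigraph


namespace ICCAux
open ICCDigraph Finset

lemma addself {t : ℕ} (a : Fin t → ZMod 2) : a + a = 0 := by
  funext i
  have h : ∀ b : ZMod 2, b + b = 0 := by decide
  exact h (a i)

lemma addcancel {t : ℕ} (a b : Fin t → ZMod 2) : a + (a + b) = b := by
  rw [← add_assoc, addself, zero_add]

lemma telescope {t m : ℕ} (f : ℕ → Fin t → ZMod 2) (g : Fin m → Fin t → ZMod 2)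
    (hg : ∀ a : Fin m, g a = f (a : ℕ) + f ((a : ℕ) + 1)) :
    ∀ d c, c + d = m → f c + ∑ a : Fin m, (if c ≤ (a : ℕ) then g a else 0) = f m := by
  intro d
  induction d with
  | zero =>
    intro c hc
    have h0 : ∀ a : Fin m, (if c ≤ (a : ℕ) then g a else 0) = 0 := by
      intro a
      rw [if_neg]
      have := a.isLt
      omega
    rw [Finset.sum_congr rfl fun a _ => h0 a, Finset.sum_const_zero, add_zero,
      show c = m by omega]
  | succ d ih =>
    intro c hc
    have hcm : c < m := by omega
    have hsplit : ∀ a : Fin m, (if c ≤ (a : ℕ) then g a else 0)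
        = (if a = ⟨c, hcm⟩ then g a else 0) + (if c + 1 ≤ (a : ℕ) then g a else 0) := by
      intro a
      by_cases h1 : a = ⟨c, hcm⟩
      · subst h1
        simp
      · have h2 : (a : ℕ) ≠ c := fun h => h1 (Fin.ext h)
        rw [if_neg h1]
        by_cases h3 : c ≤ (a : ℕ)
        · rw [if_pos h3, if_pos (by omega), zero_add]
        · rw [if_neg h3, if_neg (by omega), zero_add]
    rw [Finset.sum_congr rfl (fun a _ => hsplit a), Finset.sum_add_distrib,
      Finset.sum_ite_eq' Finset.univ (⟨c, hcm⟩ : Fin m) g, if_pos (Finset.mem_univ _),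
      hg ⟨c, hcm⟩]
    show f c + ((f c + f (c + 1)) + _) = f m
    rw [add_assoc, addcancel]
    exact ih (c + 1) (by omega)

variable {k : ℕ} (D : ICCDigraph k)

def sumI {t : ℕ} (w : D.CodeIdx → Fin t → ZMod 2) (j : Fin k) (c : ℕ) : Fin t → ZMod 2 :=
  ∑ a : Fin (D.n1 j - 1), if c ≤ (a : ℕ) then w (Sum.inl ⟨j, a⟩) else 0

def sumII {t : ℕ} (w : D.CodeIdx → Fin t → ZMod 2) (i j : Fin k) (c : ℕ) : Fin t → ZMod 2 :=
  ∑ b : Fin (D.n2 i j - 1), if c ≤ (b : ℕ) then w (Sum.inr (Sum.inl ⟨(i, j), b⟩)) else 0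

lemma msgI_eq {t : ℕ} (x : D.Vtx → Fin t → ZMod 2) (j : Fin k) (c : ℕ) (hc : c < D.n1 j) :
    D.msgI x j (c + 1) = x (Sum.inl ⟨j, ⟨c, hc⟩⟩) := by
  rw [ICCDigraph.msgI, dif_pos (show 1 ≤ c + 1 ∧ c + 1 ≤ D.n1 j from ⟨by omega, by omega⟩)]
  simp only [Nat.add_sub_cancel]

lemma msgII_eq {t : ℕ} (x : D.Vtx → Fin t → ZMod 2) (i j : Fin k) (c : ℕ) (hc : c < D.n2 i j) :
    D.msgII x i j (c + 1) = x (Sum.inr ⟨(i, j), ⟨c, hc⟩⟩) := by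
  rw [ICCDigraph.msgII, dif_pos (show 1 ≤ c + 1 ∧ c + 1 ≤ D.n2 i j from ⟨by omega, by omega⟩)]
  simp only [Nat.add_sub_cancel]

lemma msgI_top {t : ℕ} (x : D.Vtx → Fin t → ZMod 2) (j : Fin k) :
    D.msgI x j (D.n1 j) = x (D.terminal j) := by
  have h := D.hn1 j
  rw [show D.n1 j = (D.n1 j - 1) + 1 by omega, msgI_eq D x j (D.n1 j - 1) (by omega)]
  rfl

lemma msgII_top {t : ℕ} (x : D.Vtx → Fin t → ZMod 2) (i j : Fin k) (h : 1 ≤ D.n2 i j) :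
    D.msgII x i j (D.n2 i j)
      = x (Sum.inr ⟨(i, j), ⟨D.n2 i j - 1, by show D.n2 i j - 1 < D.n2 i j; omega⟩⟩) := by
  conv_lhs => rw [show D.n2 i j = (D.n2 i j - 1) + 1 by omega]
  exact msgII_eq D x i j (D.n2 i j - 1) (by omega)

lemma climbI {t : ℕ} (x : D.Vtx → Fin t → ZMod 2) (j : Fin k) (c : ℕ) (hc : c < D.n1 j) :
    x (Sum.inl ⟨j, ⟨c, hc⟩⟩) + sumI D (D.code x) j c = x (D.terminal j) := by
  have hg : ∀ a : Fin (D.n1 j - 1),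
      (fun a : Fin (D.n1 j - 1) => D.code x (Sum.inl ⟨j, a⟩)) a
        = (fun c' => D.msgI x j (c' + 1)) (a : ℕ)
          + (fun c' => D.msgI x j (c' + 1)) ((a : ℕ) + 1) := by
    intro a
    show D.msgI x j ((a : ℕ) + 1) + D.msgI x j ((a : ℕ) + 2) = _
    have h2 : ((a : ℕ) + 2) = ((a : ℕ) + 1) + 1 := by omega
    rw [h2]
  have key := telescope (fun c' => D.msgI x j (c' + 1))
    (fun a : Fin (D.n1 j - 1) => D.code x (Sum.inl ⟨j, a⟩)) hg (D.n1 j - 1 - c) c (by omega)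
  rw [msgI_eq D x j c hc] at key
  rw [show D.n1 j - 1 + 1 = D.n1 j by have := D.hn1 j; omega, msgI_top] at key
  exact key

lemma climbII {t : ℕ} (x : D.Vtx → Fin t → ZMod 2) (i j : Fin k) (c : ℕ) (hc : c < D.n2 i j) :
    x (Sum.inr ⟨(i, j), ⟨c, hc⟩⟩) + sumII D (D.code x) i j c
      = x (Sum.inr ⟨(i, j), ⟨D.n2 i j - 1, by show D.n2 i j - 1 < D.n2 i j; omega⟩⟩) := by
  have hg : ∀ b : Fin (D.n2 i j - 1),
      (fun b : Fin (D.n2 i j - 1) => D.code x (Sum.inr (Sum.inl ⟨(i, j), b⟩))) b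
        = (fun c' => D.msgII x i j (c' + 1)) (b : ℕ)
          + (fun c' => D.msgII x i j (c' + 1)) ((b : ℕ) + 1) := by
    intro b
    show D.msgII x i j ((b : ℕ) + 1) + D.msgII x i j ((b : ℕ) + 2) = _
    have h2 : ((b : ℕ) + 2) = ((b : ℕ) + 1) + 1 := by omega
    rw [h2]
  have key := telescope (fun c' => D.msgII x i j (c' + 1))
    (fun b : Fin (D.n2 i j - 1) => D.code x (Sum.inr (Sum.inl ⟨(i, j), b⟩))) hg
    (D.n2 i j - 1 - c) c (by omega)
  rw [msgII_eq D x i j c hc] at key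
  rw [show D.n2 i j - 1 + 1 = D.n2 i j by omega, msgII_top D x i j (by omega)] at key
  exact key

lemma codeI_eq {t : ℕ} (x : D.Vtx → Fin t → ZMod 2) (i : Fin k) (a : Fin (D.n1 i - 1)) :
    D.code x (Sum.inl ⟨i, a⟩)
      = x (Sum.inl ⟨i, ⟨(a : ℕ), by have := a.isLt; omega⟩⟩)
        + x (Sum.inl ⟨i, ⟨(a : ℕ) + 1, by have := a.isLt; omega⟩⟩) := by
  show D.msgI x i ((a : ℕ) + 1) + D.msgI x i ((a : ℕ) + 2) = _
  rw [show ((a : ℕ) + 2) = ((a : ℕ) + 1) + 1 by omega,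
    msgI_eq D x i (a : ℕ) (by have := a.isLt; omega),
    msgI_eq D x i ((a : ℕ) + 1) (by have := a.isLt; omega)]

lemma codeII_eq {t : ℕ} (x : D.Vtx → Fin t → ZMod 2) (p : Fin k × Fin k)
    (b : Fin (D.n2 p.1 p.2 - 1)) :
    D.code x (Sum.inr (Sum.inl ⟨p, b⟩))
      = x (Sum.inr ⟨p, ⟨(b : ℕ), by have := b.isLt; omega⟩⟩)
        + x (Sum.inr ⟨p, ⟨(b : ℕ) + 1, by have := b.isLt; omega⟩⟩) := by
  show D.msgII x p.1 p.2 ((b : ℕ) + 1) + D.msgII x p.1 p.2 ((b : ℕ) + 2) = _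
  rw [show ((b : ℕ) + 2) = ((b : ℕ) + 1) + 1 by omega,
    msgII_eq D x p.1 p.2 (b : ℕ) (by have := b.isLt; omega),
    msgII_eq D x p.1 p.2 ((b : ℕ) + 1) (by have := b.isLt; omega)]

lemma codeLink_eq {t : ℕ} (x : D.Vtx → Fin t → ZMod 2) (p : Fin k × Fin k)
    (h : 1 ≤ D.n2 p.1 p.2) :
    D.code x (Sum.inr (Sum.inr (Sum.inl ⟨p, h⟩)))
      = x (Sum.inr ⟨p, ⟨D.n2 p.1 p.2 - 1, by omega⟩⟩)
        + x (Sum.inl ⟨p.2, ⟨D.q p.1 p.2 - 1,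
            by have := D.hq1 p.1 p.2; have := D.hq2 p.1 p.2; omega⟩⟩) := by
  show D.msgII x p.1 p.2 (D.n2 p.1 p.2) + D.msgI x p.2 (D.q p.1 p.2) = _
  rw [msgII_top D x p.1 p.2 h]
  have hq := D.hq1 p.1 p.2
  have hq2 := D.hq2 p.1 p.2
  conv_lhs => rw [show D.q p.1 p.2 = (D.q p.1 p.2 - 1) + 1 by omega]
  rw [msgI_eq D x p.2 (D.q p.1 p.2 - 1) (by omega)]

lemma codeLast_eq {t : ℕ} (x : D.Vtx → Fin t → ZMod 2) (u : Unit) :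
    D.code x (Sum.inr (Sum.inr (Sum.inr u))) = ∑ j : Fin k, x (D.terminal j) := by
  show ∑ j : Fin k, D.msgI x j (D.n1 j) = _
  exact Finset.sum_congr rfl fun j _ => msgI_top D x j

lemma decodable (t : ℕ) (v : D.Vtx) :
    ∃ G : (D.CodeIdx → Fin t → ZMod 2) →
        ({u : D.Vtx // D.Arc v u} → Fin t → ZMod 2) → Fin t → ZMod 2,
      ∀ x : D.Vtx → Fin t → ZMod 2, G (D.code x) (fun u => x u.1) = x v := by
  classical
  obtain (⟨i, a⟩ | ⟨p, b⟩) := v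
  · by_cases ha : (a : ℕ) < D.n1 i - 1
    · -- non-terminal Type-I vertex
      refine ⟨fun w nb => w (Sum.inl ⟨i, ⟨(a : ℕ), ha⟩⟩) +
        nb ⟨Sum.inl ⟨i, ⟨(a : ℕ) + 1, by have := a.isLt; omega⟩⟩, Or.inl ⟨rfl, rfl⟩⟩, ?_⟩
      intro x
      show D.code x (Sum.inl ⟨i, ⟨(a : ℕ), ha⟩⟩) + x (Sum.inl ⟨i, ⟨(a : ℕ) + 1, _⟩⟩)
        = x (Sum.inl ⟨i, a⟩)
      rw [codeI_eq]
      rw [add_assoc, addself, add_zero]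
    · -- terminal vertex of P_i
      have ha' : (a : ℕ) = D.n1 i - 1 := by have := a.isLt; omega
      refine ⟨fun w nb => w (Sum.inr (Sum.inr (Sum.inr ()))) +
        ∑ j : Fin k,
          (if hj : j = i then 0 else
            if h2 : 1 ≤ D.n2 i j then
              nb ⟨Sum.inr ⟨(i, j), ⟨0, h2⟩⟩, ⟨rfl, ha', rfl⟩⟩ + sumII D w i j 0
                + w (Sum.inr (Sum.inr (Sum.inl ⟨(i, j), h2⟩)))
                + sumI D w j (D.q i j - 1)
            else
              nb ⟨Sum.inl ⟨j, ⟨D.q i j - 1,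
                    by have := D.hq1 i j; have := D.hq2 i j; omega⟩⟩,
                  Or.inr ⟨fun h => hj h.symm, ha', by omega, rfl⟩⟩
                + sumI D w j (D.q i j - 1)), ?_⟩
      intro x
      simp only []
      rw [codeLast_eq]
      have hterm : ∀ j : Fin k,
          (if hj : j = i then (0 : Fin t → ZMod 2) else
            if h2 : 1 ≤ D.n2 i j then
              x (Sum.inr ⟨(i, j), ⟨0, h2⟩⟩) + sumII D (D.code x) i j 0
                + D.code x (Sum.inr (Sum.inr (Sum.inl ⟨(i, j), h2⟩)))
                + sumI D (D.code x) j (D.q i j - 1)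
            else
              x (Sum.inl ⟨j, ⟨D.q i j - 1,
                    by have := D.hq1 i j; have := D.hq2 i j; omega⟩⟩)
                + sumI D (D.code x) j (D.q i j - 1))
          = if j = i then 0 else x (D.terminal j) := by
        intro j
        by_cases hj : j = i
        · simp [hj]
        · rw [dif_neg hj, if_neg hj]
          by_cases h2 : 1 ≤ D.n2 i j
          · rw [dif_pos h2, codeLink_eq D x (i, j) h2]
            have e1 := climbII D x i j 0 h2
            have e2 := climbI D x j (D.q i j - 1)
              (by have := D.hq1 i j; have := D.hq2 i j; omega)
            calc x (Sum.inr ⟨(i, j), ⟨0, h2⟩⟩) + sumII D (D.code x) i j 0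
                  + (x (Sum.inr ⟨(i, j), ⟨D.n2 i j - 1, _⟩⟩)
                    + x (Sum.inl ⟨(i, j).2, ⟨D.q (i, j).1 (i, j).2 - 1, _⟩⟩))
                  + sumI D (D.code x) j (D.q i j - 1)
                = x (Sum.inr ⟨(i, j), ⟨D.n2 i j - 1, by show D.n2 i j - 1 < D.n2 i j; omega⟩⟩)
                  + (x (Sum.inr ⟨(i, j), ⟨D.n2 i j - 1, by show D.n2 i j - 1 < D.n2 i j; omega⟩⟩)
                    + x (Sum.inl ⟨j, ⟨D.q i j - 1,
                        by have := D.hq1 i j; have := D.hq2 i j; omega⟩⟩))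
                  + sumI D (D.code x) j (D.q i j - 1) := by rw [e1]
              _ = x (Sum.inl ⟨j, ⟨D.q i j - 1,
                        by have := D.hq1 i j; have := D.hq2 i j; omega⟩⟩)
                  + sumI D (D.code x) j (D.q i j - 1) := by rw [addcancel]
              _ = x (D.terminal j) := e2
          · rw [dif_neg h2]
            exact climbI D x j (D.q i j - 1)
              (by have := D.hq1 i j; have := D.hq2 i j; omega)
      rw [Finset.sum_congr rfl fun j _ => hterm j, ← Finset.sum_add_distrib]
      have hpt : ∀ j : Fin k,
          x (D.terminal j) + (if j = i then 0 else x (D.terminal j))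
            = if j = i then x (D.terminal j) else 0 := by
        intro j
        by_cases hj : j = i
        · simp [hj]
        · simp [hj, addself]
      rw [Finset.sum_congr rfl fun j _ => hpt j,
        Finset.sum_ite_eq' Finset.univ i (fun j => x (D.terminal j)),
        if_pos (Finset.mem_univ i)]
      rw [show (Sum.inl ⟨i, a⟩ : D.Vtx) = D.terminal i from by
        rw [show a = (⟨D.n1 i - 1, by have := D.hn1 i; omega⟩ : Fin (D.n1 i)) from
          Fin.ext ha']
        rfl]
  · by_cases hb : (b : ℕ) < D.n2 p.1 p.2 - 1
    · -- non-final Type-II vertex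
      refine ⟨fun w nb => w (Sum.inr (Sum.inl ⟨p, ⟨(b : ℕ), hb⟩⟩)) +
        nb ⟨Sum.inr ⟨p, ⟨(b : ℕ) + 1, by have := b.isLt; omega⟩⟩, ⟨rfl, rfl⟩⟩, ?_⟩
      intro x
      show D.code x (Sum.inr (Sum.inl ⟨p, ⟨(b : ℕ), hb⟩⟩))
        + x (Sum.inr ⟨p, ⟨(b : ℕ) + 1, _⟩⟩) = x (Sum.inr ⟨p, b⟩)
      rw [codeII_eq]
      rw [add_assoc, addself, add_zero]
    · -- final Type-II vertex
      have h1 : 1 ≤ D.n2 p.1 p.2 := by have := b.isLt; omega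
      have hb' : (b : ℕ) = D.n2 p.1 p.2 - 1 := by have := b.isLt; omega
      refine ⟨fun w nb => w (Sum.inr (Sum.inr (Sum.inl ⟨p, h1⟩))) +
        nb ⟨Sum.inl ⟨p.2, ⟨D.q p.1 p.2 - 1,
              by have := D.hq1 p.1 p.2; have := D.hq2 p.1 p.2; omega⟩⟩,
            ⟨rfl, hb', rfl⟩⟩, ?_⟩
      intro x
      show D.code x (Sum.inr (Sum.inr (Sum.inl ⟨p, h1⟩)))
        + x (Sum.inl ⟨p.2, ⟨D.q p.1 p.2 - 1, _⟩⟩) = x (Sum.inr ⟨p, b⟩)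
      rw [codeLink_eq D x p h1]
      rw [add_assoc, addself, add_zero]
      exact congrArg (fun z : Fin (D.n2 p.1 p.2) => x (Sum.inr ⟨p, z⟩)) (Fin.ext hb'.symm)

def rnk (i0 : Fin k) (B : ℕ) : D.Vtx → ℕ
  | Sum.inl ⟨i, a⟩ => if i = i0 then B + (a : ℕ) else 2 * B + D.n1 i0 + (a : ℕ)
  | Sum.inr ⟨p, b⟩ => if p.2 = i0 then (b : ℕ) else B + D.n1 i0 + (b : ℕ)

lemma rnk_lt (i0 : Fin k) (B : ℕ) (hB : ∀ i j, D.n2 i j < B) {u v : D.Vtx}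
    (hu : ¬ ∃ j : Fin k, j ≠ i0 ∧ u = D.terminal j)
    (h : D.Arc u v) : rnk D i0 B u < rnk D i0 B v := by
  have hB1 : 1 ≤ B := lt_of_le_of_lt (Nat.zero_le _) (hB i0 i0)
  have hn10 : 1 ≤ D.n1 i0 := D.hn1 i0
  obtain (⟨i, a⟩ | ⟨p, b⟩) := u <;> obtain (⟨j, a'⟩ | ⟨p', b'⟩) := v
  · simp only [ICCDigraph.Arc] at h
    rcases h with ⟨rfl, h2⟩ | ⟨hij, ha, -, -⟩
    · simp only [rnk]
      split_ifs <;> omega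
    · by_cases hii : i = i0
      · have hji : ¬ j = i0 := fun hj => hij (hii.trans hj.symm)
        have hni : D.n1 i = D.n1 i0 := by rw [hii]
        have := a.isLt
        simp only [rnk, if_pos hii, if_neg hji]
        omega
      · exact absurd ⟨i, hii, by
          rw [show a = (⟨D.n1 i - 1, by have := D.hn1 i; omega⟩ : Fin (D.n1 i)) from
            Fin.ext ha]
          rfl⟩ hu
  · simp only [ICCDigraph.Arc] at h
    obtain ⟨h1, ha, hb0⟩ := h
    by_cases hii : i = i0
    · by_cases hp2 : p'.2 = i0
      · exfalso
        have hlt := b'.isLt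
        have h0 : D.n2 p'.1 p'.2 = 0 := by
          rw [← h1, hp2, hii]
          exact D.hdiag i0
        omega
      · have hni : D.n1 i = D.n1 i0 := by rw [hii]
        have := a.isLt
        simp only [rnk, if_pos hii, if_neg hp2]
        omega
    · exact absurd ⟨i, hii, by
        rw [show a = (⟨D.n1 i - 1, by have := D.hn1 i; omega⟩ : Fin (D.n1 i)) from
          Fin.ext ha]
        rfl⟩ hu
  · simp only [ICCDigraph.Arc] at h
    obtain ⟨h1, hb, ha⟩ := h
    have hblt := b.isLt
    have hBn := hB p.1 p.2
    by_cases hj : j = i0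
    · simp only [rnk, if_pos (h1.trans hj), if_pos hj]
      omega
    · have hp2 : ¬ p.2 = i0 := by rw [h1]; exact hj
      simp only [rnk, if_neg hp2, if_neg hj]
      omega
  · simp only [ICCDigraph.Arc] at h
    obtain ⟨rfl, h2⟩ := h
    simp only [rnk]
    split_ifs <;> omega

open Classical in
noncomputable def extFun (i0 : Fin k) (t : ℕ)
    (y : {v : D.Vtx // ¬ ∃ j : Fin k, j ≠ i0 ∧ v = D.terminal j} → Fin t → ZMod 2) :
    D.Vtx → Fin t → ZMod 2 :=
  fun v => if h : ∃ j : Fin k, j ≠ i0 ∧ v = D.terminal j then 0 else y ⟨v, h⟩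

lemma extFun_bad (i0 : Fin k) {t : ℕ}
    (y : {v : D.Vtx // ¬ ∃ j : Fin k, j ≠ i0 ∧ v = D.terminal j} → Fin t → ZMod 2)
    {v : D.Vtx} (h : ∃ j : Fin k, j ≠ i0 ∧ v = D.terminal j) :
    extFun D i0 t y v = 0 := dif_pos h

lemma extFun_good (i0 : Fin k) {t : ℕ}
    (y : {v : D.Vtx // ¬ ∃ j : Fin k, j ≠ i0 ∧ v = D.terminal j} → Fin t → ZMod 2)
    {v : D.Vtx} (h : ¬ ∃ j : Fin k, j ≠ i0 ∧ v = D.terminal j) :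
    extFun D i0 t y v = y ⟨v, h⟩ := dif_neg h

lemma terminal_injective : Function.Injective D.terminal := by
  intro j1 j2 h
  have h2 := Sum.inl_injective h
  exact congrArg Sigma.fst h2

end ICCAux

/-- For any ICC digraph `D`, the optimal broadcast rate
`β(D) = inf_t β_t(D)` — the infimum over all message lengths `t ≥ 1` and all
valid index codes using `p` bits of the rate `p / t` — equals `n - k + 1`. -/

theorem stmt14 {k : ℕ} (hk : 1 ≤ k) (D : ICCDigraph k) :
    sInf {r : ℝ | ∃ t : ℕ, 1 ≤ t ∧ ∃ p : ℕ,
        (∃ E : (D.Vtx → Fin t → ZMod 2) → Fin p → ZMod 2,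
          ∀ v : D.Vtx,
            ∃ g : (Fin p → ZMod 2) →
                ({u : D.Vtx // D.Arc v u} → Fin t → ZMod 2) → (Fin t → ZMod 2),
              ∀ x, g (E x) (fun u => x u.1) = x v) ∧
        r = (p : ℝ) / (t : ℝ)} =
      (Fintype.card D.Vtx : ℝ) - (k : ℝ) + 1 := by
  classical
  have hN : Fintype.card D.Vtx
      = (∑ i, D.n1 i) + ∑ p : Fin k × Fin k, D.n2 p.1 p.2 := by
    simp [ICCDigraph.Vtx]
  have hkN : k ≤ Fintype.card D.Vtx := by
    have h1 : (∑ _i : Fin k, 1) ≤ ∑ i, D.n1 i :=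
      Finset.sum_le_sum fun i _ => D.hn1 i
    simp only [Finset.sum_const, Finset.card_univ, Fintype.card_fin, smul_eq_mul,
      mul_one] at h1
    omega
  have hcode : Fintype.card D.CodeIdx + k = Fintype.card D.Vtx + 1 := by
    have hc1 : Fintype.card D.CodeIdx
        = (∑ i, (D.n1 i - 1))
          + ((∑ p : Fin k × Fin k, (D.n2 p.1 p.2 - 1))
            + ((Finset.univ.filter fun p : Fin k × Fin k => 1 ≤ D.n2 p.1 p.2).card + 1)) := by
      simp [ICCDigraph.CodeIdx, Fintype.card_subtype]
    have hs1 : (∑ i, (D.n1 i - 1)) + (∑ _i : Fin k, 1) = ∑ i, D.n1 i := by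
      rw [← Finset.sum_add_distrib]
      exact Finset.sum_congr rfl fun i _ => by have := D.hn1 i; omega
    have hs1' : (∑ _i : Fin k, (1 : ℕ)) = k := by simp
    have hs2 : (∑ p : Fin k × Fin k, (D.n2 p.1 p.2 - 1))
        + (Finset.univ.filter fun p : Fin k × Fin k => 1 ≤ D.n2 p.1 p.2).card
        = ∑ p : Fin k × Fin k, D.n2 p.1 p.2 := by
      rw [Finset.card_filter, ← Finset.sum_add_distrib]
      refine Finset.sum_congr rfl fun p _ => ?_
      split_ifs <;> omega
    omega
  have hmem : ∃ t : ℕ, 1 ≤ t ∧ ∃ p : ℕ,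
      (∃ E : (D.Vtx → Fin t → ZMod 2) → Fin p → ZMod 2,
        ∀ v : D.Vtx,
          ∃ g : (Fin p → ZMod 2) →
              ({u : D.Vtx // D.Arc v u} → Fin t → ZMod 2) → (Fin t → ZMod 2),
            ∀ x, g (E x) (fun u => x u.1) = x v) ∧
      ((Fintype.card D.Vtx : ℝ) - (k : ℝ) + 1) = (p : ℝ) / ((t : ℕ) : ℝ) := by
    refine ⟨1, le_refl 1, Fintype.card D.CodeIdx,
      ⟨fun x c => D.code x ((Fintype.equivFin D.CodeIdx).symm c) 0, ?_⟩, ?_⟩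
    · intro v
      obtain ⟨G, hG⟩ := ICCAux.decodable D 1 v
      refine ⟨fun ew nb => G (fun c _ => ew (Fintype.equivFin D.CodeIdx c)) nb, ?_⟩
      intro x
      have hw : (fun c (_ : Fin 1) =>
          D.code x ((Fintype.equivFin D.CodeIdx).symm (Fintype.equivFin D.CodeIdx c)) 0)
          = D.code x := by
        funext c j
        rw [Equiv.symm_apply_apply]
        exact congrArg (D.code x c) (Subsingleton.elim (0 : Fin 1) j)
      show G (fun c _ =>
          D.code x ((Fintype.equivFin D.CodeIdx).symm (Fintype.equivFin D.CodeIdx c)) 0)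
        (fun u => x u.1) = x v
      rw [hw]
      exact hG x
    · have h1 : (Fintype.card D.CodeIdx : ℝ) + (k : ℝ) = (Fintype.card D.Vtx : ℝ) + 1 := by
        exact_mod_cast hcode
      simp only [Nat.cast_one, div_one]
      linarith
  have hlb : ∀ r ∈ {r : ℝ | ∃ t : ℕ, 1 ≤ t ∧ ∃ p : ℕ,
      (∃ E : (D.Vtx → Fin t → ZMod 2) → Fin p → ZMod 2,
        ∀ v : D.Vtx,
          ∃ g : (Fin p → ZMod 2) →
              ({u : D.Vtx // D.Arc v u} → Fin t → ZMod 2) → (Fin t → ZMod 2),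
            ∀ x, g (E x) (fun u => x u.1) = x v) ∧
      r = (p : ℝ) / (t : ℝ)}, (Fintype.card D.Vtx : ℝ) - (k : ℝ) + 1 ≤ r := by
    rintro r ⟨t, ht, p, ⟨E, hE⟩, rfl⟩
    have hi0 : 0 < k := hk
    set i0 : Fin k := ⟨0, hi0⟩ with hi0def
    set B : ℕ := 1 + ∑ i, ∑ j, D.n2 i j with hBdef
    have hBlt : ∀ i j, D.n2 i j < B := by
      intro i j
      have h1 : D.n2 i j ≤ ∑ j', D.n2 i j' :=
        Finset.single_le_sum (fun _ _ => Nat.zero_le _) (Finset.mem_univ j)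
      have h2 : (∑ j', D.n2 i j') ≤ ∑ i', ∑ j', D.n2 i' j' :=
        Finset.single_le_sum (f := fun i' => ∑ j' : Fin k, D.n2 i' j')
          (fun _ _ => Nat.zero_le _) (Finset.mem_univ i)
      omega
    have hinj : Function.Injective
        (fun y : {v : D.Vtx // ¬ ∃ j : Fin k, j ≠ i0 ∧ v = D.terminal j} → Fin t → ZMod 2 =>
          E (ICCAux.extFun D i0 t y)) := by
      intro y y' hyy
      replace hyy : E (ICCAux.extFun D i0 t y) = E (ICCAux.extFun D i0 t y') := hyy
      have key : ∀ m : ℕ, ∀ v : D.Vtx,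
          Finset.univ.sup (ICCAux.rnk D i0 B) - ICCAux.rnk D i0 B v ≤ m →
          ICCAux.extFun D i0 t y v = ICCAux.extFun D i0 t y' v := by
        intro m
        induction m using Nat.strong_induction_on with
        | _ m ih =>
          intro v hv
          by_cases hbv : ∃ j : Fin k, j ≠ i0 ∧ v = D.terminal j
          · rw [ICCAux.extFun_bad D i0 y hbv, ICCAux.extFun_bad D i0 y' hbv]
          · obtain ⟨g, hg⟩ := hE v
            have h1 := hg (ICCAux.extFun D i0 t y)
            have h2 := hg (ICCAux.extFun D i0 t y')
            have hnb : (fun u : {u : D.Vtx // D.Arc v u} => ICCAux.extFun D i0 t y u.1)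
                = fun u => ICCAux.extFun D i0 t y' u.1 := by
              funext u
              have hr1 : ICCAux.rnk D i0 B v < ICCAux.rnk D i0 B u.1 :=
                ICCAux.rnk_lt D i0 B hBlt hbv u.2
              have hr2 : ICCAux.rnk D i0 B u.1 ≤ Finset.univ.sup (ICCAux.rnk D i0 B) :=
                Finset.le_sup (Finset.mem_univ u.1)
              exact ih (Finset.univ.sup (ICCAux.rnk D i0 B) - ICCAux.rnk D i0 B u.1)
                (by omega) u.1 (le_refl _)
            rw [← h1, ← h2, hyy, hnb]
      have hxy : ICCAux.extFun D i0 t y = ICCAux.extFun D i0 t y' :=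
        funext fun v => key _ v (Nat.sub_le _ _)
      funext z
      have hz := congrFun hxy z.1
      rw [ICCAux.extFun_good D i0 y z.2, ICCAux.extFun_good D i0 y' z.2] at hz
      exact hz
    have hcard_sub : Fintype.card {v : D.Vtx // ¬ ∃ j : Fin k, j ≠ i0 ∧ v = D.terminal j}
        + k = Fintype.card D.Vtx + 1 := by
      have e : {j : Fin k // ¬ j = i0}
          ≃ {v : D.Vtx // ∃ j : Fin k, j ≠ i0 ∧ v = D.terminal j} := by
        refine Equiv.ofBijective (fun j => ⟨D.terminal j.1, j.1, j.2, rfl⟩) ⟨?_, ?_⟩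
        · intro j1 j2 hj
          exact Subtype.ext (ICCAux.terminal_injective D (congrArg Subtype.val hj))
        · rintro ⟨v, j, hj, rfl⟩
          exact ⟨⟨j, hj⟩, rfl⟩
      have h1 : Fintype.card {v : D.Vtx // ∃ j : Fin k, j ≠ i0 ∧ v = D.terminal j} = k - 1 := by
        rw [← Fintype.card_congr e, Fintype.card_subtype_compl,
          Fintype.card_subtype_eq, Fintype.card_fin]
      have h2 := Fintype.card_subtype_compl
        (fun v : D.Vtx => ∃ j : Fin k, j ≠ i0 ∧ v = D.terminal j)
      have h3 := Fintype.card_subtype_le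
        (fun v : D.Vtx => ∃ j : Fin k, j ≠ i0 ∧ v = D.terminal j)
      omega
    have hfin := Fintype.card_le_of_injective _ hinj
    simp only [Fintype.card_fun, Fintype.card_fin, ZMod.card] at hfin
    rw [← pow_mul] at hfin
    have hle : t * Fintype.card {v : D.Vtx // ¬ ∃ j : Fin k, j ≠ i0 ∧ v = D.terminal j} ≤ p :=
      (Nat.pow_le_pow_iff_right (by norm_num)).mp hfin
    have hm := hcard_sub
    have ht0 : (0 : ℝ) < (t : ℝ) := by exact_mod_cast Nat.lt_of_lt_of_le Nat.zero_lt_one ht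
    rw [le_div_iff₀ ht0]
    have hcast : ((Fintype.card {v : D.Vtx // ¬ ∃ j : Fin k, j ≠ i0 ∧ v = D.terminal j} : ℕ) : ℝ)
        + (k : ℝ) = (Fintype.card D.Vtx : ℝ) + 1 := by exact_mod_cast hm
    have hles : ((Fintype.card {v : D.Vtx // ¬ ∃ j : Fin k, j ≠ i0 ∧ v = D.terminal j}
        * t : ℕ) : ℝ) ≤ (p : ℝ) := by
      exact_mod_cast (by rw [Nat.mul_comm]; exact hle :
        Fintype.card {v : D.Vtx // ¬ ∃ j : Fin k, j ≠ i0 ∧ v = D.terminal j} * t ≤ p)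
    push_cast at hles
    have heq : (Fintype.card D.Vtx : ℝ) - (k : ℝ) + 1
        = ((Fintype.card {v : D.Vtx // ¬ ∃ j : Fin k, j ≠ i0 ∧ v = D.terminal j} : ℕ) : ℝ) := by
      linarith
    rw [heq]
    exact hles
  exact le_antisymm
    (csInf_le ⟨(Fintype.card D.Vtx : ℝ) - (k : ℝ) + 1, hlb⟩ hmem)
    (le_csInf ⟨_, hmem⟩ hlb)
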